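/- For any node i of a finite simple digraph and a uniformly random spanning converging forest φ, the estimator ω̄_ii(φ) = (1/(1+d_i))·(1 + Σ_{k ∈ N⁻(i)} ω̂_ik(φ)) is an unbiased estimator of ω_ii with variance Var(ω̄_ii) = 3ω_ii/(1+d_i) − 2/(1+d_i)² − ω_ii², and this variance is at most the variance ω_ii − ω_ii² of the indicator estimator ω̂_ii. -/

import Mathlib

open Finset

/-- A spanning converging forest of the digraph with edge relation `E`,
encoded by its successor map `f : V → Option V` (`f i = some j` means edge `(i,j)`
is in the forest, `f i = none` means `i` is a root).  Acyclicity is expressed by a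
height function that strictly decreases along edges. -/
def IsSCF {V : Type*} (E : V → V → Prop) (f : V → Option V) : Prop :=
  (∀ i j, f i = some j → E i j) ∧ ∃ h : V → ℕ, ∀ i j, f i = some j → h j < h i

open scoped Classical in
/-- The set `F` of all spanning converging forests of the digraph `E`. -/
noncomputable def forests {V : Type*} [Fintype V] [DecidableEq V]
    (E : V → V → Prop) : Finset (V → Option V) :=
  Finset.univ.filter (IsSCF E)

/-- The root `r_φ(i)` of the tree containing node `i` in the forest `f`:
follow successors until reaching a root. -/
def rootOf {V : Type*} [Fintype V] (f : V → Option V) (i : V) : V :=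
  (fun x => (f x).getD x)^[Fintype.card V] i

/-- The combinatorial forest-matrix entry `ω_{ij} = |F_{ij}| / |F|`. -/
noncomputable def fOmega {V : Type*} [Fintype V] [DecidableEq V]
    (E : V → V → Prop) (i j : V) : ℝ :=
  (((forests E).filter (fun f => rootOf f i = j)).card : ℝ) / ((forests E).card : ℝ)

/-- Expectation of `g` under a uniformly random spanning converging forest. -/
noncomputable def expVal {V : Type*} [Fintype V] [DecidableEq V]
    (E : V → V → Prop) (g : (V → Option V) → ℝ) : ℝ :=
  (∑ f ∈ forests E, g f) / ((forests E).card : ℝ)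

/-- Variance of `g` under a uniformly random spanning converging forest. -/
noncomputable def varVal {V : Type*} [Fintype V] [DecidableEq V]
    (E : V → V → Prop) (g : (V → Option V) → ℝ) : ℝ :=
  expVal E (fun f => (g f - expVal E g) ^ 2)

/-- The indicator estimator `ω̂_{ij}(φ) = 1_{r_φ(i) = j}`. -/
noncomputable def indEst {V : Type*} [Fintype V] [DecidableEq V]
    (i j : V) (f : V → Option V) : ℝ :=
  if rootOf f i = j then 1 else 0

/-- Out-degree `d_i` of node `i`. -/
def outDeg {V : Type*} [Fintype V] (E : V → V → Prop) [DecidableRel E] (i : V) : ℕ :=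
  (Finset.univ.filter (fun j => E i j)).card

/-- In-neighbors `N⁻(j)` of node `j`. -/
def inNbrs {V : Type*} [Fintype V] (E : V → V → Prop) [DecidableRel E] (j : V) : Finset V :=
  Finset.univ.filter (fun k => E k j)

/-- The out-degree Laplacian `L = D - A`. -/
noncomputable def lap {V : Type*} [Fintype V] [DecidableEq V]
    (E : V → V → Prop) [DecidableRel E] : Matrix V V ℝ :=
  Matrix.of fun i j => (if i = j then (outDeg E i : ℝ) else 0) - (if E i j then (1 : ℝ) else 0)

/-- The forest matrix `Ω = (I + L)⁻¹`. -/
noncomputable def forestMatrix {V : Type*} [Fintype V] [DecidableEq V]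
    (E : V → V → Prop) [DecidableRel E] : Matrix V V ℝ :=
  (1 + lap E)⁻¹


set_option linter.unusedSectionVars false

namespace SCFAux

variable {V : Type*} [Fintype V] [DecidableEq V]

def stepf (f : V → Option V) (x : V) : V := (f x).getD x

lemma rootOf_def (f : V → Option V) (x : V) :
    rootOf f x = (stepf f)^[Fintype.card V] x := rfl

lemma stepf_some {f : V → Option V} {x y : V} (h : f x = some y) : stepf f x = y := by
  simp [stepf, h]

lemma stepf_none {f : V → Option V} {x : V} (h : f x = none) : stepf f x = x := by
  simp [stepf, h]

lemma iter_fixed {f : V → Option V} {x : V} (h : f x = none) (n : ℕ) :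
    (stepf f)^[n] x = x :=
  Function.iterate_fixed (stepf_none h) n

lemma iter_absorb {f : V → Option V} {x y : V} {m n : ℕ} (hm : (stepf f)^[m] x = y)
    (hy : f y = none) (hmn : m ≤ n) : (stepf f)^[n] x = y := by
  obtain ⟨k, rfl⟩ := Nat.exists_eq_add_of_le hmn
  rw [add_comm, Function.iterate_add_apply, hm, iter_fixed hy]

lemma iter_congr {f g : V → Option V} {x : V} {n : ℕ}
    (h : ∀ m < n, g ((stepf f)^[m] x) = f ((stepf f)^[m] x)) :
    (stepf g)^[n] x = (stepf f)^[n] x := by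
  induction n with
  | zero => rfl
  | succ n ih =>
    rw [Function.iterate_succ_apply', Function.iterate_succ_apply',
      ih (fun m hm => h m (hm.trans (Nat.lt_succ_self n)))]
    show stepf g _ = stepf f _
    have hp := h n (Nat.lt_succ_self n)
    exact congrArg (fun o => Option.getD o ((stepf f)^[n] x)) hp

def NoCyc (f : V → Option V) : Prop :=
  ∀ x n, 0 < n → (stepf f)^[n] x = x → f x = none

lemma orbit_cyc {f : V → Option V} {x : V} {n : ℕ} (h : (stepf f)^[n] x = x) (m : ℕ) :
    (stepf f)^[n] ((stepf f)^[m] x) = (stepf f)^[m] x := by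
  rw [← Function.iterate_add_apply, add_comm, Function.iterate_add_apply, h]

lemma orbit_nonroot {f : V → Option V} {x : V} {n : ℕ} (hn : 0 < n)
    (h : (stepf f)^[n] x = x) (hx : f x ≠ none) (m : ℕ) :
    f ((stepf f)^[m] x) ≠ none := by
  intro hnone
  apply hx
  have hper : (stepf f)^[n * (m + 1)] x = x := by
    rw [Function.iterate_mul]; exact Function.iterate_fixed h (m + 1)
  have habs : (stepf f)^[n * (m + 1)] x = (stepf f)^[m] x :=
    iter_absorb rfl hnone (le_trans (Nat.le_succ m) (Nat.le_mul_of_pos_left _ hn))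
  rw [hper] at habs
  rw [habs]; exact hnone

lemma nocyc_of_agree {f g : V → Option V} (hg : NoCyc g)
    (H : ∀ x n, 0 < n → (stepf f)^[n] x = x → (∀ m, f ((stepf f)^[m] x) ≠ none) →
      ∀ m < n, g ((stepf f)^[m] x) = f ((stepf f)^[m] x)) : NoCyc f := by
  intro x n hn hcyc
  by_contra hfx
  have horb := orbit_nonroot hn hcyc hfx
  have hag := H x n hn hcyc horb
  have hgc : (stepf g)^[n] x = x := by rw [iter_congr hag, hcyc]
  have hnone := hg x n hn hgc
  have h0 := hag 0 hn
  simp only [Function.iterate_zero_apply] at h0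
  exact hfx (by rw [← h0]; exact hnone)

lemma exists_repeat (f : V → Option V) (x : V) {n : ℕ} (hn : Fintype.card V ≤ n) :
    ∃ a b, a < b ∧ b ≤ n ∧ (stepf f)^[a] x = (stepf f)^[b] x := by
  have hcard : Fintype.card V < Fintype.card (Fin (n + 1)) := by
    simpa using Nat.lt_succ_of_le hn
  obtain ⟨a, b, hab, heq⟩ := Fintype.exists_ne_map_eq_of_card_lt
    (fun m : Fin (n + 1) => (stepf f)^[(m : ℕ)] x) hcard
  rcases lt_or_gt_of_ne hab with h1 | h1
  · exact ⟨a, b, h1, Nat.lt_succ_iff.mp b.isLt, heq⟩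
  · exact ⟨b, a, h1, Nat.lt_succ_iff.mp a.isLt, heq.symm⟩

lemma cycle_of_repeat {f : V → Option V} {x : V} {a b : ℕ} (hab : a < b)
    (h : (stepf f)^[a] x = (stepf f)^[b] x) :
    (stepf f)^[b - a] ((stepf f)^[a] x) = (stepf f)^[a] x := by
  rw [← Function.iterate_add_apply, Nat.sub_add_cancel hab.le, ← h]

lemma root_none {f : V → Option V} (hf : NoCyc f) (x : V) : f (rootOf f x) = none := by
  obtain ⟨a, b, hab, hb, heq⟩ := exists_repeat f x (le_refl (Fintype.card V))
  have hcyc := cycle_of_repeat hab heq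
  have hroot : f ((stepf f)^[a] x) = none := hf _ _ (Nat.sub_pos_of_lt hab) hcyc
  have habs : (stepf f)^[Fintype.card V] x = (stepf f)^[a] x :=
    iter_absorb rfl hroot (le_trans hab.le hb)
  rw [rootOf_def, habs]
  exact hroot

lemma root_of_none {f : V → Option V} {x : V} (h : f x = none) : rootOf f x = x :=
  iter_fixed h _

lemma none_of_root {f : V → Option V} {x : V} (hf : NoCyc f) (h : rootOf f x = x) :
    f x = none := h ▸ root_none hf x

lemma root_eq_of_hit {f : V → Option V} {x y : V} {m : ℕ} (h : (stepf f)^[m] x = y)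
    (hy : f y = none) (hm : m ≤ Fintype.card V) : rootOf f x = y := by
  rw [rootOf_def]; exact iter_absorb h hy hm

lemma root_step {f : V → Option V} {x y : V} (hf : NoCyc f) (h : f x = some y) :
    rootOf f x = rootOf f y := by
  have h2 : (stepf f)^[Fintype.card V + 1] x = rootOf f y := by
    rw [Function.iterate_succ_apply, stepf_some h]; rfl
  have h3 : (stepf f)^[Fintype.card V + 1] x = rootOf f x := by
    rw [Function.iterate_succ_apply', ← rootOf_def, stepf_none (root_none hf x)]
  rw [← h3, h2]

open scoped Classical in
noncomputable def ht (f : V → Option V) (x y : V) : ℕ :=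
  if h : ∃ n, (stepf f)^[n] x = y then Nat.find h else 0

open scoped Classical in
lemma ht_spec {f : V → Option V} {x y : V} (h : ∃ n, (stepf f)^[n] x = y) :
    (stepf f)^[ht f x y] x = y := by
  rw [ht, dif_pos h]; exact Nat.find_spec h

open scoped Classical in
lemma ht_min {f : V → Option V} {x y : V} (h : ∃ n, (stepf f)^[n] x = y) {m : ℕ}
    (hm : m < ht f x y) : (stepf f)^[m] x ≠ y := by
  rw [ht, dif_pos h] at hm; exact Nat.find_min h hm

open scoped Classical in
lemma ht_le {f : V → Option V} {x y : V} {n : ℕ} (h : (stepf f)^[n] x = y) :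
    ht f x y ≤ n := by
  rw [ht, dif_pos ⟨n, h⟩]; exact Nat.find_le h

lemma ht_eq {f : V → Option V} {x y : V} {n : ℕ} (h : (stepf f)^[n] x = y)
    (hmin : ∀ m < n, (stepf f)^[m] x ≠ y) : ht f x y = n := by
  refine le_antisymm (ht_le h) ?_
  by_contra hlt
  exact hmin _ (Nat.lt_of_not_le hlt) (ht_spec ⟨n, h⟩)

lemma ht_nonroot {f : V → Option V} {x y : V} (h : ∃ n, (stepf f)^[n] x = y) {m : ℕ}
    (hm : m < ht f x y) : f ((stepf f)^[m] x) ≠ none := by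
  intro hnone
  exact ht_min h hm (by rw [← ht_spec h]; exact (iter_absorb rfl hnone hm.le).symm)

lemma ht_lt_card {f : V → Option V} (hf : NoCyc f) {x y : V}
    (h : ∃ n, (stepf f)^[n] x = y) : ht f x y < Fintype.card V := by
  by_contra hle
  obtain ⟨a, b, hab, hb, heq⟩ := exists_repeat f x (Nat.le_of_not_lt hle)
  have hroot : f ((stepf f)^[a] x) = none :=
    hf _ _ (Nat.sub_pos_of_lt hab) (cycle_of_repeat hab heq)
  exact ht_nonroot h (lt_of_lt_of_le hab hb) hroot

lemma nocyc_of_height {f : V → Option V}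
    (hex : ∃ h : V → ℕ, ∀ i j, f i = some j → h j < h i) : NoCyc f := by
  obtain ⟨h, hh⟩ := hex
  intro x n hn hcyc
  by_cases hnone : ∃ m < n, f ((stepf f)^[m] x) = none
  · obtain ⟨m, hm, hmn⟩ := hnone
    have habs : (stepf f)^[n] x = (stepf f)^[m] x := iter_absorb rfl hmn hm.le
    rw [hcyc] at habs
    rw [habs]; exact hmn
  · push_neg at hnone
    exfalso
    have key : ∀ m ≤ n, h ((stepf f)^[m] x) + m ≤ h x := by
      intro m
      induction m with
      | zero => simp
      | succ m ih =>
        intro hm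
        have hm' : m < n := hm
        obtain ⟨y, hy⟩ := Option.ne_none_iff_exists'.mp (hnone m hm')
        have hstep : (stepf f)^[m + 1] x = y := by
          rw [Function.iterate_succ_apply', stepf_some hy]
        have hlt := hh _ _ hy
        have := ih (le_of_lt hm')
        rw [hstep]; omega
    have hfin := key n le_rfl
    rw [hcyc] at hfin
    omega

noncomputable def hgt (f : V → Option V) (x : V) : ℕ := ht f x (rootOf f x)

lemma height_of_nocyc {f : V → Option V} (hf : NoCyc f) (x y : V) (hxy : f x = some y) :
    hgt f y < hgt f x := by
  have hex : ∃ n, (stepf f)^[n] x = rootOf f x := ⟨Fintype.card V, rfl⟩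
  have hroot := root_step hf hxy
  have hT := ht_spec hex
  have hT1 : 1 ≤ ht f x (rootOf f x) := by
    rcases Nat.eq_zero_or_pos (ht f x (rootOf f x)) with h0 | h
    · exfalso
      rw [h0, Function.iterate_zero_apply] at hT
      have := none_of_root hf hT.symm
      rw [hxy] at this
      exact Option.some_ne_none y this
    · exact h
  have hsucc : ht f x (rootOf f x) - 1 + 1 = ht f x (rootOf f x) :=
    Nat.succ_pred_eq_of_pos hT1
  have hstep : (stepf f)^[ht f x (rootOf f x) - 1] y = rootOf f y := by
    have h5 : (stepf f)^[ht f x (rootOf f x) - 1 + 1] x = rootOf f x := by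
      rw [hsucc]; exact hT
    rw [Function.iterate_succ_apply, stepf_some hxy] at h5
    rw [h5, hroot]
  have := ht_le hstep
  unfold hgt
  omega

lemma nocyc_iff (f : V → Option V) :
    NoCyc f ↔ ∃ h : V → ℕ, ∀ i j, f i = some j → h j < h i :=
  ⟨fun hf => ⟨hgt f, fun _ _ h => height_of_nocyc hf _ _ h⟩, nocyc_of_height⟩

lemma mem_forests {E : V → V → Prop} {f : V → Option V} :
    f ∈ forests E ↔ (∀ a b, f a = some b → E a b) ∧ NoCyc f := by
  classical
  rw [forests]
  simp only [Finset.mem_filter, Finset.mem_univ, true_and, IsSCF, nocyc_iff]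

lemma forests_nonempty (E : V → V → Prop) : (forests E).Nonempty := by
  refine ⟨fun _ => none, mem_forests.mpr ⟨fun a b h => (by cases h), fun x n _ _ => rfl⟩⟩

lemma nocyc_update_none {f : V → Option V} (hf : NoCyc f) (i : V) :
    NoCyc (Function.update f i none) := by
  apply nocyc_of_agree hf
  intro x n hn hcyc horb m hm
  have hne : (stepf (Function.update f i none))^[m] x ≠ i := by
    intro h
    exact horb m (by rw [h]; simp)
  exact (Function.update_of_ne hne none f).symm

lemma root_update_ne {f : V → Option V} (hf : NoCyc f) {i j : V} (hij : f i = some j)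
    (hji : j ≠ i) : rootOf (Function.update f i none) j ≠ i := by
  set g := Function.update f i none with hg
  intro hroot
  have hex : ∃ n, (stepf g)^[n] j = i := ⟨Fintype.card V, hroot⟩
  have hspec := ht_spec hex
  have htrans : (stepf f)^[ht g j i] j = i := by
    rw [iter_congr (f := g) (g := f)
      (fun m hm => (Function.update_of_ne (ht_min hex hm) none f).symm)]
    exact hspec
  have hcycj : (stepf f)^[ht g j i + 1] j = j := by
    rw [Function.iterate_succ_apply', htrans, stepf_some hij]
  have hjnone := hf j _ (Nat.succ_pos _) hcycj
  rw [iter_fixed hjnone] at htrans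
  exact hji htrans

lemma nocyc_update_some {g : V → Option V} (hg : NoCyc g) {i j : V} (hgi : g i = none)
    (hroot : rootOf g j ≠ i) : NoCyc (Function.update g i (some j)) := by
  set f := Function.update g i (some j) with hfdef
  apply nocyc_of_agree hg
  intro x n hn hcyc horb m hm
  have hnoti : ∀ m', (stepf f)^[m'] x ≠ i := by
    intro m' hm'
    have hcyci : (stepf f)^[n] i = i := hm' ▸ orbit_cyc hcyc m'
    have hfi : f i = some j := Function.update_self i (some j) g
    have hn1 : (stepf f)^[n - 1] j = i := by
      have hsucc : n - 1 + 1 = n := Nat.succ_pred_eq_of_pos hn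
      rw [← hsucc, Function.iterate_succ_apply, stepf_some hfi] at hcyci
      exact hcyci
    have hex : ∃ n', (stepf f)^[n'] j = i := ⟨n - 1, hn1⟩
    have hspec := ht_spec hex
    have htrans : (stepf g)^[ht f j i] j = i := by
      rw [iter_congr (f := f) (g := g)
        (fun m'' hm'' => (Function.update_of_ne (ht_min hex hm'') (some j) g).symm)]
      exact hspec
    have hexg : ∃ n', (stepf g)^[n'] j = i := ⟨_, htrans⟩
    exact hroot (root_eq_of_hit (ht_spec hexg) hgi (ht_lt_card hg hexg).le)
  exact (Function.update_of_ne (hnoti m) (some j) g).symm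

variable {E : V → V → Prop} [DecidableRel E]

lemma fiber_card (hE : ∀ a, ¬ E a a) {i : V} {g : V → Option V} (hg : g ∈ forests E)
    (hgroot : rootOf g i = i) :
    ((forests E).filter (fun f => Function.update f i none = g)).card
      = (univ.filter (fun j => E i j ∧ rootOf g j ≠ i)).card + 1 := by
  obtain ⟨hedge, hnc⟩ := mem_forests.mp hg
  have hgi : g i = none := none_of_root hnc hgroot
  have hcard : (insert none ((univ.filter (fun j => E i j ∧ rootOf g j ≠ i)).image some)).card
      = (univ.filter (fun j => E i j ∧ rootOf g j ≠ i)).card + 1 := by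
    rw [Finset.card_insert_of_notMem (by simp),
      Finset.card_image_of_injective _ (Option.some_injective V)]
  rw [← hcard]
  apply Finset.card_nbij' (fun f => f i) (fun v => Function.update g i v)
  · -- forward membership
    intro f hf
    simp only [Finset.mem_coe, Finset.mem_filter] at hf ⊢
    obtain ⟨hfF, hfib⟩ := hf
    obtain ⟨hfe, hfnc⟩ := mem_forests.mp hfF
    rcases hv : f i with _ | j
    · exact Finset.mem_insert_self _ _
    · refine Finset.mem_insert_of_mem (Finset.mem_image.mpr ⟨j, ?_, rfl⟩)
      have hEij : E i j := hfe _ _ hv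
      have hji : j ≠ i := fun h => hE i (h ▸ hEij)
      refine Finset.mem_filter.mpr ⟨Finset.mem_univ _, hEij, ?_⟩
      rw [← hfib]
      exact root_update_ne hfnc hv hji
  · -- backward membership
    intro v hv
    have hupd : Function.update (Function.update g i v) i none = g := by
      rw [Function.update_idem, ← hgi, Function.update_eq_self]
    refine Finset.mem_filter.mpr ⟨?_, hupd⟩
    rcases Finset.mem_insert.mp hv with rfl | hv'
    · show Function.update g i none ∈ forests E
      rw [← hgi, Function.update_eq_self]; exact hg
    · obtain ⟨j, hj, rfl⟩ := Finset.mem_image.mp hv'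
      obtain ⟨-, hEij, hrootne⟩ := Finset.mem_filter.mp hj
      refine mem_forests.mpr ⟨?_, nocyc_update_some hnc hgi hrootne⟩
      intro a b hab
      beta_reduce at hab
      rcases eq_or_ne a i with rfl | hai
      · rw [Function.update_self] at hab
        cases hab; exact hEij
      · rw [Function.update_of_ne hai] at hab
        exact hedge _ _ hab
  · -- left inverse
    intro f hf
    simp only [Finset.mem_coe, Finset.mem_filter] at hf ⊢
    funext x
    rcases eq_or_ne x i with rfl | hxi
    · rw [Function.update_self]
    · rw [Function.update_of_ne hxi, ← hf.2, Function.update_of_ne hxi]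
  · -- right inverse
    intro v _
    exact Function.update_self i v g

lemma count_C1 (hE : ∀ a, ¬ E a a) (i : V) :
    (forests E).card
      + ∑ g ∈ (forests E).filter (fun f => rootOf f i = i),
          (univ.filter (fun j => E i j ∧ rootOf g j = i)).card
      = (1 + outDeg E i) * ((forests E).filter (fun f => rootOf f i = i)).card := by
  have hmaps : ∀ f ∈ forests E,
      Function.update f i none ∈ (forests E).filter (fun f => rootOf f i = i) := by
    intro f hf
    obtain ⟨hedge, hnc⟩ := mem_forests.mp hf
    refine Finset.mem_filter.mpr ⟨mem_forests.mpr ⟨?_, nocyc_update_none hnc i⟩, ?_⟩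
    · intro a b hab
      rcases eq_or_ne a i with rfl | hai
      · rw [Function.update_self] at hab; cases hab
      · rw [Function.update_of_ne hai] at hab; exact hedge _ _ hab
    · exact root_of_none (Function.update_self i none f)
  rw [Finset.card_eq_sum_card_fiberwise hmaps]
  have hsum : ∀ g ∈ (forests E).filter (fun f => rootOf f i = i),
      ((forests E).filter (fun f => Function.update f i none = g)).card
        + (univ.filter (fun j => E i j ∧ rootOf g j = i)).card
      = 1 + outDeg E i := by
    intro g hg
    obtain ⟨hgF, hgroot⟩ := Finset.mem_filter.mp hg
    rw [fiber_card hE hgF hgroot]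
    have hsplit : (univ.filter (fun j => E i j ∧ rootOf g j = i)).card
        + (univ.filter (fun j => E i j ∧ rootOf g j ≠ i)).card = outDeg E i := by
      rw [outDeg, ← Finset.filter_filter, ← Finset.filter_filter,
        Finset.card_filter_add_card_filter_not]
    omega
  rw [← Finset.sum_add_distrib, Finset.sum_congr rfl hsum, Finset.sum_const, smul_eq_mul]
  ring

noncomputable def pen (g : V → Option V) (x y : V) : V := (stepf g)^[ht g x y - 1] x

noncomputable def theta (i : V) (f : V → Option V) : Σ _ : V → Option V, V :=
  ⟨Function.update (Function.update f i none) (rootOf f i) (some i), (f i).getD i⟩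

noncomputable def phi (i : V) (p : Σ _ : V → Option V, V) : V → Option V :=
  Function.update (Function.update p.1 (pen p.1 p.2 i) none) i (some p.2)

lemma phi_props (hE : ∀ a, ¬ E a a) {i : V} {g : V → Option V} {j : V}
    (hgF : g ∈ forests E) (hgi : rootOf g i = i) (hEij : E i j) (hrj : rootOf g j = i) :
    phi i ⟨g, j⟩ ∈ forests E ∧ rootOf (phi i ⟨g, j⟩) i = pen g j i ∧
    g (pen g j i) = some i ∧ pen g j i ≠ i ∧
    (phi i ⟨g, j⟩) i = some j ∧ (phi i ⟨g, j⟩) (pen g j i) = none ∧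
    (∀ x, x ≠ i → x ≠ pen g j i → phi i ⟨g, j⟩ x = g x) := by
  obtain ⟨hedge, hnc⟩ := mem_forests.mp hgF
  have hgi0 : g i = none := none_of_root hnc hgi
  have hji : j ≠ i := fun h => hE i (h ▸ hEij)
  have hex : ∃ n, (stepf g)^[n] j = i := ⟨Fintype.card V, hrj⟩
  set t := ht g j i with htdef
  have hspec : (stepf g)^[t] j = i := ht_spec hex
  have ht1 : 1 ≤ t := by
    rcases Nat.eq_zero_or_pos t with h0 | h
    · exfalso; rw [h0, Function.iterate_zero_apply] at hspec; exact hji hspec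
    · exact h
  have hsucc : t - 1 + 1 = t := Nat.succ_pred_eq_of_pos ht1
  set k := pen g j i with hkdef
  have hk : k = (stepf g)^[t - 1] j := rfl
  have hstep_k : stepf g k = i := by
    have h5 : (stepf g)^[t - 1 + 1] j = i := by rw [hsucc]; exact hspec
    rw [Function.iterate_succ_apply'] at h5
    rw [hk]; exact h5
  have hk_ne_i : k ≠ i := by rw [hk]; exact ht_min hex (by omega)
  have hk_some : g k = some i := by
    rcases hgk : g k with _ | z
    · exfalso; rw [stepf_none hgk] at hstep_k; exact hk_ne_i hstep_k
    · rw [stepf_some hgk] at hstep_k; rw [hstep_k]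
  have hmin_k : ∀ m < t - 1, (stepf g)^[m] j ≠ k := by
    intro m hm heq
    have : (stepf g)^[m + 1] j = i := by
      rw [Function.iterate_succ_apply', heq, hstep_k]
    exact ht_min hex (by omega) this
  set f' := phi i ⟨g, j⟩ with hf'def
  have hf'i : f' i = some j := Function.update_self _ _ _
  have hf'k : f' k = none := by
    rw [hf'def, phi, Function.update_of_ne hk_ne_i, Function.update_self]
  have hf'x : ∀ x, x ≠ i → x ≠ k → f' x = g x := by
    intro x hxi hxk
    rw [hf'def, phi, Function.update_of_ne hxi, Function.update_of_ne hxk]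
  have htrans : ∀ m ≤ t - 1, (stepf f')^[m] j = (stepf g)^[m] j := by
    intro m hm
    exact iter_congr (f := g) (g := f') (fun l hl =>
      hf'x _ (ht_min hex (by omega)) (hmin_k l (by omega)))
  have hpath' : (stepf f')^[t - 1] j = k := by rw [htrans (t - 1) le_rfl, hk]
  have hit : (stepf f')^[t] i = k := by
    rw [← hsucc, Function.iterate_succ_apply, stepf_some hf'i, hpath']
  have htlt : t < Fintype.card V := ht_lt_card hnc hex
  have hroot' : rootOf f' i = k := root_eq_of_hit hit hf'k htlt.le
  have hnc' : NoCyc f' := by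
    apply nocyc_of_agree hnc
    intro x n hn hcyc horb m hm
    have hpk : ∀ m', (stepf f')^[m'] x ≠ k := by
      intro m' h
      exact horb m' (by rw [h]; exact hf'k)
    have hpi : (stepf f')^[m] x ≠ i := by
      intro h
      apply hpk (t + m)
      rw [Function.iterate_add_apply, h, hit]
    exact (hf'x _ hpi (hpk m)).symm
  have hedge' : ∀ a b, f' a = some b → E a b := by
    intro a b hab
    rcases eq_or_ne a i with rfl | hai
    · rw [hf'i] at hab; cases hab; exact hEij
    · rcases eq_or_ne a k with rfl | hak
      · rw [hf'k] at hab; cases hab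
      · rw [hf'x _ hai hak] at hab; exact hedge _ _ hab
  exact ⟨mem_forests.mpr ⟨hedge', hnc'⟩, hroot', hk_some, hk_ne_i, hf'i, hf'k, hf'x⟩

lemma theta_props (hE : ∀ a, ¬ E a a) {i : V} {f : V → Option V}
    (hfF : f ∈ forests E) (hEr : E (rootOf f i) i) :
    (theta i f).1 ∈ forests E ∧ rootOf (theta i f).1 i = i ∧ E i (theta i f).2 ∧
    rootOf (theta i f).1 (theta i f).2 = i ∧ phi i (theta i f) = f := by
  obtain ⟨hedge, hnc⟩ := mem_forests.mp hfF
  set k := rootOf f i with hkdef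
  have hki : k ≠ i := fun h => hE i (h ▸ hEr)
  have hfk : f k = none := root_none hnc i
  have hfi : f i = some ((f i).getD i) := by
    rcases hv : f i with _ | z
    · exact absurd (root_of_none hv) hki
    · rfl
  set j := (f i).getD i with hjdef
  have hEij : E i j := hedge _ _ hfi
  have hji : j ≠ i := fun h => hE i (h ▸ hEij)
  set g := Function.update (Function.update f i none) k (some i) with hgdef
  have htheta1 : (theta i f).1 = g := rfl
  have htheta2 : (theta i f).2 = j := rfl
  have hg_i : g i = none := by
    rw [hgdef, Function.update_of_ne (Ne.symm hki), Function.update_self]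
  have hg_k : g k = some i := Function.update_self _ _ _
  have hgx : ∀ x, x ≠ i → x ≠ k → g x = f x := by
    intro x hxi hxk
    rw [hgdef, Function.update_of_ne hxk, Function.update_of_ne hxi]
  have hQ6 : ∀ m, (stepf f)^[m] j ≠ i := by
    intro m heq
    have hcyc : (stepf f)^[m + 1] j = j := by
      rw [Function.iterate_succ_apply', heq, stepf_some hfi]
    have hjn := hnc j (m + 1) (Nat.succ_pos _) hcyc
    rw [iter_fixed hjn] at heq
    exact hji heq
  have hrfj : rootOf f j = k := by rw [hkdef, root_step hnc hfi]
  have hexk : ∃ n, (stepf f)^[n] j = k := ⟨Fintype.card V, hrfj⟩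
  set T := ht f j k with hTdef
  have hTspec : (stepf f)^[T] j = k := ht_spec hexk
  have hTlt : T < Fintype.card V := ht_lt_card hnc hexk
  have htransT : ∀ m ≤ T, (stepf g)^[m] j = (stepf f)^[m] j := by
    intro m hm
    exact iter_congr (f := f) (g := g) (fun l hl =>
      hgx _ (hQ6 l) (ht_min hexk (by omega)))
  have hgTj : (stepf g)^[T] j = k := by rw [htransT T le_rfl, hTspec]
  have hgT1 : (stepf g)^[T + 1] j = i := by
    rw [Function.iterate_succ_apply', hgTj, stepf_some hg_k]
  have hnc' : NoCyc g := by
    apply nocyc_of_agree hnc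
    intro x n hn hcyc horb m hm
    have hpi : ∀ m', (stepf g)^[m'] x ≠ i := by
      intro m' h
      exact horb m' (by rw [h]; exact hg_i)
    have hpk : (stepf g)^[m] x ≠ k := by
      intro h
      apply hpi (m + 1)
      rw [Function.iterate_succ_apply', h, stepf_some hg_k]
    exact (hgx _ (hpi m) hpk).symm
  have hedge' : ∀ a b, g a = some b → E a b := by
    intro a b hab
    rcases eq_or_ne a k with rfl | hak
    · rw [hg_k] at hab; cases hab; exact hEr
    · rcases eq_or_ne a i with rfl | hai
      · rw [hg_i] at hab; cases hab
      · rw [hgx _ hai hak] at hab; exact hedge _ _ hab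
  have hgF : g ∈ forests E := mem_forests.mpr ⟨hedge', hnc'⟩
  have hgrooti : rootOf g i = i := root_of_none hg_i
  have hgrootj : rootOf g j = i := root_eq_of_hit hgT1 hg_i hTlt
  have hht : ht g j i = T + 1 := by
    apply ht_eq hgT1
    intro m hm
    rw [htransT m (by omega)]
    exact hQ6 m
  have hpen : pen g j i = k := by
    rw [pen, hht, Nat.add_sub_cancel, hgTj]
  have hrt : phi i (theta i f) = f := by
    funext x
    rcases eq_or_ne x i with rfl | hxi
    · rw [phi, Function.update_self, hfi]
      rw [htheta2]
    · rcases eq_or_ne x k with rfl | hxk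
      · rw [phi, Function.update_of_ne hki]
        show Function.update g (pen g j i) none k = f k
        rw [hpen, Function.update_self, hfk]
      · rw [phi, Function.update_of_ne hxi]
        show Function.update g (pen g j i) none x = f x
        rw [hpen, Function.update_of_ne hxk]
        exact hgx _ hxi hxk
  rw [htheta1, htheta2]
  exact ⟨hgF, hgrooti, hEij, hgrootj, hrt⟩

lemma count_C2 (hE : ∀ a, ¬ E a a) (i : V) :
    ∑ g ∈ (forests E).filter (fun f => rootOf f i = i),
        (univ.filter (fun j => E i j ∧ rootOf g j = i)).card
      = ((forests E).filter (fun f => E (rootOf f i) i)).card := by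
  rw [← Finset.card_sigma]
  apply Finset.card_nbij' (phi i) (theta i)
  · intro p hp
    obtain ⟨g, j⟩ := p
    simp only [Finset.mem_coe, Finset.mem_sigma, Finset.mem_filter, Finset.mem_univ, true_and] at hp
    obtain ⟨⟨hgF, hgi⟩, hEij, hrj⟩ := hp
    obtain ⟨hmem, hroot', hksome, -, -, -, -⟩ := phi_props hE hgF hgi hEij hrj
    refine Finset.mem_filter.mpr ⟨hmem, ?_⟩
    rw [hroot']
    exact (mem_forests.mp hgF).1 _ _ hksome
  · intro f hf
    obtain ⟨hfF, hEr⟩ := Finset.mem_filter.mp hf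
    obtain ⟨h1, h2, h3, h4, -⟩ := theta_props hE hfF hEr
    exact Finset.mem_sigma.mpr ⟨Finset.mem_filter.mpr ⟨h1, h2⟩,
      Finset.mem_filter.mpr ⟨Finset.mem_univ _, h3, h4⟩⟩
  · intro p hp
    obtain ⟨g, j⟩ := p
    simp only [Finset.mem_coe, Finset.mem_sigma, Finset.mem_filter, Finset.mem_univ, true_and] at hp
    obtain ⟨⟨hgF, hgi⟩, hEij, hrj⟩ := hp
    obtain ⟨hmem, hroot', hksome, hkne, hf'i, hf'k, hf'x⟩ := phi_props hE hgF hgi hEij hrj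
    have hgi0 : g i = none := none_of_root (mem_forests.mp hgF).2 hgi
    rw [theta]
    have e2 : ((phi i ⟨g, j⟩) i).getD i = j := by rw [hf'i]; rfl
    have e1 : Function.update (Function.update (phi i ⟨g, j⟩) i none)
        (rootOf (phi i ⟨g, j⟩) i) (some i) = g := by
      rw [hroot']
      funext x
      rcases eq_or_ne x (pen g j i) with rfl | hxk
      · rw [Function.update_self, hksome]
      · rw [Function.update_of_ne hxk]
        rcases eq_or_ne x i with rfl | hxi
        · rw [Function.update_self, hgi0]
        · rw [Function.update_of_ne hxi, hf'x _ hxi hxk]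
    rw [e1, e2]
  · intro f hf
    obtain ⟨hfF, hEr⟩ := Finset.mem_filter.mp hf
    exact (theta_props hE hfF hEr).2.2.2.2

lemma key_identity (hE : ∀ a, ¬ E a a) (i : V) :
    (1 + outDeg E i) * ((forests E).filter (fun f => rootOf f i = i)).card
      = (forests E).card + ((forests E).filter (fun f => E (rootOf f i) i)).card := by
  rw [← count_C1 hE i, count_C2 hE i]

end SCFAux

/-- for any node i, the estimator
ω̄_ii(φ) = (1/(1+d_i))·(1 + Σ_{k ∈ N⁻(i)} ω̂_ik(φ)) is unbiased for ω_ii with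
variance 3ω_ii/(1+d_i) − 2/(1+d_i)² − ω_ii², which is at most the variance
ω_ii − ω_ii² of the indicator estimator. -/
theorem diagEst_unbiased_variance_reduced {V : Type*} [Fintype V] [DecidableEq V]
    (E : V → V → Prop) [DecidableRel E] (hE : ∀ i, ¬ E i i) (i : V) :
    expVal E (fun f => (1 / (1 + (outDeg E i : ℝ))) *
        (1 + ∑ k ∈ inNbrs E i, indEst i k f)) = fOmega E i i ∧
    varVal E (fun f => (1 / (1 + (outDeg E i : ℝ))) *
        (1 + ∑ k ∈ inNbrs E i, indEst i k f))
      = 3 * fOmega E i i / (1 + (outDeg E i : ℝ))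
          - 2 / (1 + (outDeg E i : ℝ)) ^ 2 - (fOmega E i i) ^ 2 ∧
    varVal E (fun f => (1 / (1 + (outDeg E i : ℝ))) *
        (1 + ∑ k ∈ inNbrs E i, indEst i k f))
      ≤ fOmega E i i - (fOmega E i i) ^ 2 := by
  classical
  have hne : (forests E).Nonempty := SCFAux.forests_nonempty E
  have hNpos : (0:ℝ) < ((forests E).card : ℝ) := by
    exact_mod_cast Finset.card_pos.mpr hne
  have hKI : (1 + (outDeg E i : ℝ))
        * (((forests E).filter (fun f => rootOf f i = i)).card : ℝ)
      = ((forests E).card : ℝ)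
        + (((forests E).filter (fun f => E (rootOf f i) i)).card : ℝ) := by
    exact_mod_cast SCFAux.key_identity hE i
  have hA0 : (0:ℝ) ≤ (((forests E).filter (fun f => rootOf f i = i)).card : ℝ) := by
    positivity
  have hA1 : (((forests E).filter (fun f => rootOf f i = i)).card : ℝ)
      ≤ ((forests E).card : ℝ) := by
    exact_mod_cast Finset.card_filter_le _ _
  have hT : ∀ f : V → Option V, (∑ k ∈ inNbrs E i, indEst i k f)
      = (if E (rootOf f i) i then (1:ℝ) else 0) := by
    intro f
    simp only [indEst, inNbrs]
    rw [Finset.sum_ite_eq]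
    simp [Finset.mem_filter]
  have hsum1 : ∑ f ∈ forests E, (1 + ∑ k ∈ inNbrs E i, indEst i k f)
      = ((forests E).card : ℝ)
        + (((forests E).filter (fun f => E (rootOf f i) i)).card : ℝ) := by
    rw [Finset.sum_add_distrib]
    congr 1
    · simp
    · rw [Finset.sum_congr rfl (fun f _ => hT f), Finset.sum_boole]
  have hsum2 : ∑ f ∈ forests E, (1 + ∑ k ∈ inNbrs E i, indEst i k f) ^ 2
      = ((forests E).card : ℝ)
        + 3 * (((forests E).filter (fun f => E (rootOf f i) i)).card : ℝ) := by
    have hpt : ∀ f ∈ forests E, (1 + ∑ k ∈ inNbrs E i, indEst i k f) ^ 2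
        = 1 + 3 * (if E (rootOf f i) i then (1:ℝ) else 0) := by
      intro f _
      rw [hT f]
      split_ifs <;> norm_num
    rw [Finset.sum_congr rfl hpt, Finset.sum_add_distrib, ← Finset.mul_sum,
      Finset.sum_boole]
    congr 1
    simp
  set N := ((forests E).card : ℝ) with hN
  set A := (((forests E).filter (fun f => rootOf f i = i)).card : ℝ) with hA
  set B := (((forests E).filter (fun f => E (rootOf f i) i)).card : ℝ) with hB
  set D := (1 + (outDeg E i : ℝ)) with hD
  have hω : fOmega E i i = A / N := rfl
  clear_value N A B D
  have hDpos : (0:ℝ) < D := by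
    rw [hD]
    positivity
  have hBval : B = D * A - N := by linarith
  have hexp : expVal E (fun f => 1 / D * (1 + ∑ k ∈ inNbrs E i, indEst i k f))
      = A / N := by
    rw [expVal, ← hN, ← Finset.mul_sum, hsum1, hBval]
    field_simp
    ring
  have hvar : varVal E (fun f => 1 / D * (1 + ∑ k ∈ inNbrs E i, indEst i k f))
      = 3 * (A / N) / D - 2 / D ^ 2 - (A / N) ^ 2 := by
    rw [varVal, hexp, expVal, ← hN]
    have hpt : ∀ f ∈ forests E,
        (1 / D * (1 + ∑ k ∈ inNbrs E i, indEst i k f) - A / N) ^ 2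
        = (1 / D) ^ 2 * ((1 + ∑ k ∈ inNbrs E i, indEst i k f) ^ 2)
          - (2 * A / (N * D)) * (1 + ∑ k ∈ inNbrs E i, indEst i k f)
          + (A / N) ^ 2 := by
      intro f _
      field_simp
      ring
    rw [Finset.sum_congr rfl hpt, Finset.sum_add_distrib, Finset.sum_sub_distrib,
      ← Finset.mul_sum, ← Finset.mul_sum, hsum1, hsum2, Finset.sum_const,
      nsmul_eq_mul, ← hN, hBval]
    field_simp
    ring
  have hω0 : (0:ℝ) ≤ A / N := div_nonneg hA0 hNpos.le
  have hω1 : A / N ≤ 1 := by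
    rw [div_le_one hNpos]
    exact hA1
  have hDD : (0:ℝ) ≤ (D - 1) * (D - 2) := by
    rw [hD]
    rcases Nat.eq_zero_or_pos (outDeg E i) with h0 | h1
    · rw [h0]
      norm_num
    · have h2 : (1:ℝ) ≤ (outDeg E i : ℝ) := by exact_mod_cast h1
      nlinarith
  have hineq : 3 * (A / N) / D - 2 / D ^ 2 - (A / N) ^ 2 ≤ A / N - (A / N) ^ 2 := by
    have key2 : 3 * (A / N) * D - 2 ≤ (A / N) * D ^ 2 := by
      nlinarith [mul_nonneg hω0 hDD, sub_nonneg.mpr hω1]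
    have hrw : 3 * (A / N) / D - 2 / D ^ 2 = (3 * (A / N) * D - 2) / D ^ 2 := by
      field_simp
    have h3 : 3 * (A / N) / D - 2 / D ^ 2 ≤ A / N := by
      rw [hrw, div_le_iff₀ (by positivity : (0:ℝ) < D ^ 2)]
      linarith [key2]
    linarith
  refine ⟨?_, ?_, ?_⟩
  · rw [hexp, hω]
  · rw [hvar, hω]
  · rw [hvar, hω]
    exact hineq
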